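/- Let X and Y be independent real-valued càdlàg stochastic processes on [0,∞) such that X is stochastically continuous (for every t, X(s) → X(t) in probability as s → t). Then for every measurable functional F from càdlàg path space to [0,∞), almost surely X(F(Y)−) = X(F(Y)), i.e. X is almost surely continuous at the random time F(Y). In particular, X and Y almost surely share no common discontinuity point. -/

import Mathlib

open MeasureTheory ProbabilityTheory Filter Set

/-- `f` is càdlàg on `[0,∞)`. -/
def Cadlag (f : ℝ → ℝ) : Prop :=
  (∀ t : ℝ, 0 ≤ t → ContinuousWithinAt f (Set.Ici t) t) ∧
  (∀ t : ℝ, 0 < t → ∃ l : ℝ, Filter.Tendsto f (nhdsWithin t (Set.Iio t)) (nhds l))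

/-- `t` is a (left) discontinuity point of the path `f`. -/
def PathDisc (f : ℝ → ℝ) (t : ℝ) : Prop :=
  ¬ Filter.Tendsto f (nhdsWithin t (Set.Iio t)) (nhds (f t))

open scoped ENNReal

noncomputable section

namespace NSDAux

/-! ### Dyadic rational approximation sequences -/

def lq (n : ℕ) (t : ℝ) : ℚ := ((⌈t * 2 ^ n⌉ - 1 : ℤ) : ℚ) / 2 ^ n

def rq (n : ℕ) (t : ℝ) : ℚ := ((⌈t * 2 ^ n⌉ : ℤ) : ℚ) / 2 ^ n

lemma lq_cast (n : ℕ) (t : ℝ) : (lq n t : ℝ) = ((⌈t * 2 ^ n⌉ : ℤ) - 1) / 2 ^ n := by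
  unfold lq; push_cast; ring

lemma rq_cast (n : ℕ) (t : ℝ) : (rq n t : ℝ) = ((⌈t * 2 ^ n⌉ : ℤ) : ℝ) / 2 ^ n := by
  unfold rq; push_cast; ring

lemma lq_lt (n : ℕ) (t : ℝ) : (lq n t : ℝ) < t := by
  have h2 : (0:ℝ) < 2 ^ n := by positivity
  rw [lq_cast, div_lt_iff₀ h2]
  have := Int.ceil_lt_add_one (t * 2 ^ n)
  linarith

lemma le_lq (n : ℕ) (t : ℝ) : t - 1 / 2 ^ n ≤ (lq n t : ℝ) := by
  have h2 : (0:ℝ) < 2 ^ n := by positivity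
  rw [lq_cast, le_div_iff₀ h2]
  have h := Int.le_ceil (t * 2 ^ n)
  have h1 : (1 / 2 ^ n : ℝ) * 2 ^ n = 1 := one_div_mul_cancel (ne_of_gt h2)
  have hexp : (t - 1 / 2 ^ n) * 2 ^ n = t * 2 ^ n - 1 / 2 ^ n * 2 ^ n := by ring
  rw [hexp, h1]; linarith

lemma le_rq (n : ℕ) (t : ℝ) : t ≤ (rq n t : ℝ) := by
  have h2 : (0:ℝ) < 2 ^ n := by positivity
  rw [rq_cast, le_div_iff₀ h2]
  exact Int.le_ceil _

lemma rq_le (n : ℕ) (t : ℝ) : (rq n t : ℝ) ≤ t + 1 / 2 ^ n := by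
  have h2 : (0:ℝ) < 2 ^ n := by positivity
  rw [rq_cast, div_le_iff₀ h2]
  have := Int.ceil_lt_add_one (t * 2 ^ n)
  have h1 : (1 / 2 ^ n : ℝ) * 2 ^ n = 1 := one_div_mul_cancel (ne_of_gt h2)
  have hexp : (t + 1 / 2 ^ n) * 2 ^ n = t * 2 ^ n + 1 / 2 ^ n * 2 ^ n := by ring
  rw [hexp, h1]; linarith

lemma tendsto_inv_two_pow : Tendsto (fun n : ℕ => (1:ℝ) / 2 ^ n) atTop (nhds 0) := by
  have h := tendsto_pow_atTop_nhds_zero_of_lt_one (show (0:ℝ) ≤ 1/2 by norm_num)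
    (show (1/2:ℝ) < 1 by norm_num)
  convert h using 2 with n
  rw [div_pow, one_pow]

lemma tendsto_lq (t : ℝ) : Tendsto (fun n => (lq n t : ℝ)) atTop (nhds t) := by
  have hlow : Tendsto (fun n : ℕ => t - 1 / 2 ^ n) atTop (nhds t) := by
    have := tendsto_const_nhds (x := t) (f := atTop (α := ℕ)) |>.sub tendsto_inv_two_pow
    simpa using this
  exact tendsto_of_tendsto_of_tendsto_of_le_of_le hlow tendsto_const_nhds
    (fun n => le_lq n t) (fun n => (lq_lt n t).le)

lemma tendsto_rq (t : ℝ) : Tendsto (fun n => (rq n t : ℝ)) atTop (nhds t) := by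
  have hhigh : Tendsto (fun n : ℕ => t + 1 / 2 ^ n) atTop (nhds t) := by
    have := tendsto_const_nhds (x := t) (f := atTop (α := ℕ)) |>.add tendsto_inv_two_pow
    simpa using this
  exact tendsto_of_tendsto_of_tendsto_of_le_of_le tendsto_const_nhds hhigh
    (fun n => le_rq n t) (fun n => rq_le n t)

lemma tendsto_lq_within (t : ℝ) :
    Tendsto (fun n => (lq n t : ℝ)) atTop (nhdsWithin t (Set.Iio t)) :=
  tendsto_nhdsWithin_of_tendsto_nhds_of_eventually_within _ (tendsto_lq t)
    (Eventually.of_forall fun n => lq_lt n t)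

lemma tendsto_rq_within (t : ℝ) :
    Tendsto (fun n => (rq n t : ℝ)) atTop (nhdsWithin t (Set.Ici t)) :=
  tendsto_nhdsWithin_of_tendsto_nhds_of_eventually_within _ (tendsto_rq t)
    (Eventually.of_forall fun n => le_rq n t)

lemma measurable_lq (n : ℕ) : Measurable fun t : ℝ => lq n t := by
  have h1 : Measurable fun t : ℝ => ⌈t * 2 ^ n⌉ :=
    Int.measurable_ceil.comp (measurable_id.mul_const _)
  exact (measurable_of_countable (fun z : ℤ => ((z - 1 : ℤ) : ℚ) / 2 ^ n)).comp h1

lemma measurable_rq (n : ℕ) : Measurable fun t : ℝ => rq n t := by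
  have h1 : Measurable fun t : ℝ => ⌈t * 2 ^ n⌉ :=
    Int.measurable_ceil.comp (measurable_id.mul_const _)
  exact (measurable_of_countable (fun z : ℤ => ((z : ℤ) : ℚ) / 2 ^ n)).comp h1

/-! ### The bad set -/

lemma measurable_evalQ : Measurable fun p : (ℚ → ℝ) × ℚ => p.1 p.2 :=
  measurable_from_prod_countable_left fun q => measurable_pi_apply q

def dseq (n : ℕ) (p : ℝ × (ℚ → ℝ)) : ℝ≥0∞ :=
  ENNReal.ofReal |p.2 (lq n p.1) - p.2 (rq n p.1)|

lemma measurable_dseq (n : ℕ) : Measurable (dseq n) := by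
  have h1 : Measurable fun p : ℝ × (ℚ → ℝ) => p.2 (lq n p.1) :=
    measurable_evalQ.comp (measurable_snd.prodMk ((measurable_lq n).comp measurable_fst))
  have h2 : Measurable fun p : ℝ × (ℚ → ℝ) => p.2 (rq n p.1) :=
    measurable_evalQ.comp (measurable_snd.prodMk ((measurable_rq n).comp measurable_fst))
  exact ((h1.sub h2).abs).ennreal_ofReal

def badSet : Set (ℝ × (ℚ → ℝ)) :=
  {p | 0 < p.1 ∧ 0 < Filter.limsup (fun n => dseq n p) Filter.atTop}

lemma measurable_limsup_dseq :
    Measurable fun p : ℝ × (ℚ → ℝ) => Filter.limsup (fun n => dseq n p) Filter.atTop :=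
  Measurable.limsup fun n => measurable_dseq n

lemma measurableSet_badSet : MeasurableSet badSet := by
  have h1 : MeasurableSet {p : ℝ × (ℚ → ℝ) | 0 < p.1} := measurable_fst measurableSet_Ioi
  have h2 : MeasurableSet {p : ℝ × (ℚ → ℝ) |
      0 < Filter.limsup (fun n => dseq n p) Filter.atTop} :=
    measurable_limsup_dseq measurableSet_Ioi
  exact h1.inter h2

lemma mem_badSet_iff {f : ℝ → ℝ} (hf : Cadlag f) {t : ℝ} (ht : 0 < t) :
    ((t, fun q : ℚ => f q) ∈ badSet) ↔ PathDisc f t := by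
  obtain ⟨l, hl⟩ := hf.2 t ht
  have h1 : Tendsto (fun n => f (lq n t : ℝ)) atTop (nhds l) := hl.comp (tendsto_lq_within t)
  have h2 : Tendsto (fun n => f (rq n t : ℝ)) atTop (nhds (f t)) :=
    Filter.Tendsto.comp (hf.1 t ht.le) (tendsto_rq_within t)
  have hd : Tendsto (fun n => dseq n (t, fun q : ℚ => f q)) atTop
      (nhds (ENNReal.ofReal |l - f t|)) := by
    have : Tendsto (fun n => |f (lq n t : ℝ) - f (rq n t : ℝ)|) atTop (nhds |l - f t|) :=
      (h1.sub h2).abs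
    exact (ENNReal.continuous_ofReal.tendsto _).comp this
  have hls : Filter.limsup (fun n => dseq n (t, fun q : ℚ => f q)) Filter.atTop
      = ENNReal.ofReal |l - f t| := hd.limsup_eq
  constructor
  · rintro ⟨-, hpos⟩
    rw [hls, ENNReal.ofReal_pos, abs_pos, sub_ne_zero] at hpos
    intro htend
    exact hpos (tendsto_nhds_unique hl htend)
  · intro hdisc
    refine ⟨ht, ?_⟩
    rw [hls, ENNReal.ofReal_pos, abs_pos, sub_ne_zero]
    intro hlf
    exact hdisc (hlf ▸ hl)

end NSDAux

namespace NSDAux2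

/-! ### Rational oscillation and bisection -/

def oscQ (x : ℚ → ℝ) (a b : ℚ) : ℝ≥0∞ :=
  ⨆ q : ℚ, ⨆ r : ℚ,
    if q ∈ Set.Ioc a b ∧ r ∈ Set.Ioc a b then ENNReal.ofReal |x q - x r| else 0

lemma le_oscQ {x : ℚ → ℝ} {a b q r : ℚ} (hq : q ∈ Set.Ioc a b) (hr : r ∈ Set.Ioc a b) :
    ENNReal.ofReal |x q - x r| ≤ oscQ x a b := by
  have h : ENNReal.ofReal |x q - x r|
      = if q ∈ Set.Ioc a b ∧ r ∈ Set.Ioc a b then ENNReal.ofReal |x q - x r| else 0 :=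
    (if_pos ⟨hq, hr⟩).symm
  rw [h]
  exact le_iSup₂ (f := fun q r =>
    if q ∈ Set.Ioc a b ∧ r ∈ Set.Ioc a b then ENNReal.ofReal |x q - x r| else 0) q r

lemma oscQ_le {x : ℚ → ℝ} {a b : ℚ} {c : ℝ}
    (h : ∀ q ∈ Set.Ioc a b, ∀ r ∈ Set.Ioc a b, |x q - x r| ≤ c) :
    oscQ x a b ≤ ENNReal.ofReal c := by
  refine iSup_le fun q => iSup_le fun r => ?_
  split_ifs with hmem
  · exact ENNReal.ofReal_le_ofReal (h q hmem.1 r hmem.2)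
  · exact zero_le

lemma measurable_oscQ :
    Measurable fun p : (ℚ → ℝ) × ℚ × ℚ => oscQ p.1 p.2.1 p.2.2 := by
  apply measurable_from_prod_countable_left
  rintro ⟨a, b⟩
  apply Measurable.iSup; intro q
  apply Measurable.iSup; intro r
  dsimp only
  split_ifs with h
  · exact ((measurable_pi_apply q).sub (measurable_pi_apply r)).abs.ennreal_ofReal
  · exact measurable_const

def bis (δ : ℝ) (u v : ℚ) (x : ℚ → ℝ) : ℕ → ℚ × ℚ
  | 0 => (u, v)
  | n + 1 =>
    if ENNReal.ofReal δ ≤ oscQ x (bis δ u v x n).1 (((bis δ u v x n).1 + (bis δ u v x n).2) / 2)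
    then ((bis δ u v x n).1, ((bis δ u v x n).1 + (bis δ u v x n).2) / 2)
    else (((bis δ u v x n).1 + (bis δ u v x n).2) / 2, (bis δ u v x n).2)

lemma measurable_bis (δ : ℝ) (u v : ℚ) (n : ℕ) : Measurable fun x => bis δ u v x n := by
  induction n with
  | zero => exact measurable_const
  | succ n ih =>
    have h1 : Measurable fun x => (bis δ u v x n).1 := measurable_fst.comp ih
    have h2 : Measurable fun x => (bis δ u v x n).2 := measurable_snd.comp ih
    have hmid : Measurable fun x => ((bis δ u v x n).1 + (bis δ u v x n).2) / 2 :=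
      (measurable_of_countable (fun p : ℚ × ℚ => (p.1 + p.2) / 2)).comp ih
    have hS : MeasurableSet {x : ℚ → ℝ |
        ENNReal.ofReal δ ≤ oscQ x (bis δ u v x n).1
          (((bis δ u v x n).1 + (bis δ u v x n).2) / 2)} := by
      have hmap : Measurable fun x : ℚ → ℝ =>
          ((x, ((bis δ u v x n).1, ((bis δ u v x n).1 + (bis δ u v x n).2) / 2)) :
            (ℚ → ℝ) × ℚ × ℚ) :=
        measurable_id.prodMk (h1.prodMk hmid)
      exact hmap (measurableSet_le measurable_const measurable_oscQ)
    have heq : (fun x => bis δ u v x (n + 1)) = fun x =>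
        if ENNReal.ofReal δ ≤ oscQ x (bis δ u v x n).1
          (((bis δ u v x n).1 + (bis δ u v x n).2) / 2)
        then ((bis δ u v x n).1, ((bis δ u v x n).1 + (bis δ u v x n).2) / 2)
        else (((bis δ u v x n).1 + (bis δ u v x n).2) / 2, (bis δ u v x n).2) := by
      funext x; simp [bis]
    rw [heq]
    exact Measurable.ite hS (h1.prodMk hmid) (hmid.prodMk h2)

def jumpT (δ : ℝ) (u v : ℚ) (x : ℚ → ℝ) : ℝ :=
  (⨅ n, ENNReal.ofReal (((bis δ u v x n).2 : ℝ))).toReal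

lemma jumpT_nonneg (δ : ℝ) (u v : ℚ) (x : ℚ → ℝ) : 0 ≤ jumpT δ u v x :=
  ENNReal.toReal_nonneg

lemma measurable_jumpT (δ : ℝ) (u v : ℚ) : Measurable fun x => jumpT δ u v x := by
  apply ENNReal.measurable_toReal.comp
  apply Measurable.iInf
  intro n
  exact (measurable_of_countable (fun p : ℚ × ℚ => ENNReal.ofReal ((p.2 : ℝ)))).comp
    (measurable_bis δ u v n)

lemma abs_key {l gt δ y z : ℝ} (hδ : 0 < δ) (hJ : 2 * δ ≤ |l - gt|) (h1 : |y - l| ≤ δ / 8)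
    (h2 : |z - gt| ≤ δ / 8) : δ ≤ |y - z| := by
  have t1 : |l - gt| ≤ |l - y| + |y - gt| := abs_sub_le l y gt
  have t2 : |y - gt| ≤ |y - z| + |z - gt| := abs_sub_le y z gt
  have t3 : |l - y| = |y - l| := abs_sub_comm l y
  linarith

lemma jumpT_eq {g : ℝ → ℝ} {t l δ : ℝ} (hδ : 0 < δ) (ht0 : 0 ≤ t) {u v : ℚ}
    (hut : (u : ℝ) < t) (htv : t ≤ (v : ℝ))
    (hL : ∀ q : ℚ, (u : ℝ) < (q : ℝ) → (q : ℝ) < t → |g q - l| ≤ δ / 8)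
    (hR : ∀ q : ℚ, t ≤ (q : ℝ) → (q : ℝ) ≤ (v : ℝ) → |g q - g t| ≤ δ / 8)
    (hJ : 2 * δ ≤ |l - g t|) :
    jumpT δ u v (fun q : ℚ => g q) = t := by
  set x : ℚ → ℝ := fun q : ℚ => g q with hx
  -- claim: intervals containing t have large oscillation
  have claimHigh : ∀ a b : ℚ, (u : ℝ) ≤ a → (b : ℝ) ≤ v → (a : ℝ) < t → t ≤ (b : ℝ) →
      ENNReal.ofReal δ ≤ oscQ x a b := by
    intro a b hua hbv hat htb
    obtain ⟨q, hq1, hq2⟩ := exists_rat_btwn hat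
    have hqmem : q ∈ Set.Ioc a b := by
      constructor
      · exact_mod_cast hq1
      · exact_mod_cast hq2.le.trans htb
    have hqval : |x q - l| ≤ δ / 8 := hL q (lt_of_le_of_lt hua hq1) hq2
    rcases eq_or_lt_of_le htb with hb | hb
    · -- t = b
      have hbmem : b ∈ Set.Ioc a b := by
        refine ⟨?_, le_refl b⟩
        exact_mod_cast hat.trans_le htb
      have hbval : |x b - g t| ≤ δ / 8 := hR b htb hbv
      refine le_trans ?_ (le_oscQ hqmem hbmem)
      exact ENNReal.ofReal_le_ofReal (abs_key hδ hJ hqval hbval)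
    · -- t < b
      obtain ⟨r, hr1, hr2⟩ := exists_rat_btwn hb
      have hrmem : r ∈ Set.Ioc a b := by
        constructor
        · exact_mod_cast hat.trans hr1
        · exact_mod_cast hr2.le
      have hrval : |x r - g t| ≤ δ / 8 := hR r hr1.le (hr2.le.trans hbv)
      refine le_trans ?_ (le_oscQ hqmem hrmem)
      exact ENNReal.ofReal_le_ofReal (abs_key hδ hJ hqval hrval)
  -- claim: intervals avoiding t have small oscillation
  have claimLow : ∀ a b : ℚ, (u : ℝ) ≤ a → (b : ℝ) ≤ v → ¬((a : ℝ) < t ∧ t ≤ (b : ℝ)) →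
      oscQ x a b < ENNReal.ofReal δ := by
    intro a b hua hbv hnot
    have hbound : ∀ q ∈ Set.Ioc a b, ∀ r ∈ Set.Ioc a b, |x q - x r| ≤ δ / 4 := by
      intro q hq r hr
      have hcases : t ≤ (a : ℝ) ∨ (b : ℝ) < t := by
        rcases le_or_gt t (a : ℝ) with h | h
        · exact Or.inl h
        · exact Or.inr (lt_of_not_ge fun hb' => hnot ⟨h, hb'⟩)
      rcases hcases with hta | hbt
      · have e1 : |x q - g t| ≤ δ / 8 := by
          refine hR q (le_trans hta ?_) (le_trans ?_ hbv)
          · exact_mod_cast hq.1.le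
          · exact_mod_cast hq.2
        have e2 : |x r - g t| ≤ δ / 8 := by
          refine hR r (le_trans hta ?_) (le_trans ?_ hbv)
          · exact_mod_cast hr.1.le
          · exact_mod_cast hr.2
        calc |x q - x r| ≤ |x q - g t| + |g t - x r| := abs_sub_le _ _ _
          _ ≤ δ / 8 + δ / 8 := by
              rw [abs_sub_comm (g t) (x r)]; exact add_le_add e1 e2
          _ = δ / 4 := by ring
      · have e1 : |x q - l| ≤ δ / 8 := by
          refine hL q (lt_of_le_of_lt hua ?_) (lt_of_le_of_lt ?_ hbt)
          · exact_mod_cast hq.1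
          · exact_mod_cast hq.2
        have e2 : |x r - l| ≤ δ / 8 := by
          refine hL r (lt_of_le_of_lt hua ?_) (lt_of_le_of_lt ?_ hbt)
          · exact_mod_cast hr.1
          · exact_mod_cast hr.2
        calc |x q - x r| ≤ |x q - l| + |l - x r| := abs_sub_le _ _ _
          _ ≤ δ / 8 + δ / 8 := by
              rw [abs_sub_comm l (x r)]; exact add_le_add e1 e2
          _ = δ / 4 := by ring
    calc oscQ x a b ≤ ENNReal.ofReal (δ / 4) := oscQ_le hbound
      _ < ENNReal.ofReal δ := by
          rw [ENNReal.ofReal_lt_ofReal_iff hδ]; linarith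
  -- invariants of the bisection
  have inv : ∀ n : ℕ, (u : ℝ) ≤ ((bis δ u v x n).1 : ℝ) ∧ (((bis δ u v x n).2 : ℝ)) ≤ v ∧
      (bis δ u v x n).1 < (bis δ u v x n).2 ∧ (((bis δ u v x n).1 : ℝ)) < t ∧
      t ≤ (((bis δ u v x n).2 : ℝ)) ∧
      (bis δ u v x n).2 - (bis δ u v x n).1 = (v - u) / 2 ^ n := by
    intro n
    induction n with
    | zero =>
      have huv : u < v := by exact_mod_cast hut.trans_le htv
      exact ⟨le_refl _, le_refl _, huv, hut, htv, by simp [bis]⟩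
    | succ n ih =>
      obtain ⟨h1, h2, h3, h4, h5, h6⟩ := ih
      set a := (bis δ u v x n).1 with ha
      set b := (bis δ u v x n).2 with hb
      set m : ℚ := (a + b) / 2 with hm
      have ham : a < m := by rw [hm]; linarith
      have hmb : m < b := by rw [hm]; linarith
      have hmv : (m : ℝ) ≤ v := le_trans (by exact_mod_cast hmb.le) h2
      have hum : (u : ℝ) ≤ m := le_trans h1 (by exact_mod_cast ham.le)
      have hstep : bis δ u v x (n + 1) =
          if ENNReal.ofReal δ ≤ oscQ x a m then (a, m) else (m, b) := by
        simp only [bis, ← ha, ← hb, ← hm]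
      have hlen : (m - a : ℚ) = (v - u) / 2 ^ (n + 1) ∧ (b - m : ℚ) = (v - u) / 2 ^ (n + 1) := by
        constructor
        · have : m - a = (b - a) / 2 := by rw [hm]; ring
          rw [this, h6, pow_succ]; ring
        · have : b - m = (b - a) / 2 := by rw [hm]; ring
          rw [this, h6, pow_succ]; ring
      rcases le_or_gt t (m : ℝ) with htm | hmt
      · have hosc := claimHigh a m h1 hmv h4 htm
        rw [hstep, if_pos hosc]
        exact ⟨h1, hmv, ham, h4, htm, hlen.1⟩
      · have hosc := claimLow a m h1 hmv (fun h => absurd h.2 (not_le.mpr hmt))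
        rw [hstep, if_neg (not_le.mpr hosc)]
        exact ⟨hum, h2, hmb, hmt, h5, hlen.2⟩
  -- the right endpoints decrease and converge to t
  have hbsucc : ∀ n, (bis δ u v x (n + 1)).2 ≤ (bis δ u v x n).2 := by
    intro n
    have h3 := (inv n).2.2.1
    by_cases hc : ENNReal.ofReal δ ≤ oscQ x (bis δ u v x n).1
        (((bis δ u v x n).1 + (bis δ u v x n).2) / 2)
    · simp only [bis, if_pos hc]
      linarith
    · simp only [bis, if_neg hc]
      exact le_refl _
  have hanti : Antitone fun n => ENNReal.ofReal (((bis δ u v x n).2 : ℝ)) := by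
    apply antitone_nat_of_succ_le
    intro n
    apply ENNReal.ofReal_le_ofReal
    exact_mod_cast hbsucc n
  have htendb : Tendsto (fun n => (((bis δ u v x n).2 : ℝ))) atTop (nhds t) := by
    have hupper : ∀ n, (((bis δ u v x n).2 : ℝ)) ≤ t + (v - u : ℚ) / 2 ^ n := by
      intro n
      obtain ⟨h1, h2, h3, h4, h5, h6⟩ := inv n
      have hcast : ((bis δ u v x n).2 : ℝ) = ((bis δ u v x n).1 : ℝ) + ((v - u : ℚ) : ℝ) / 2 ^ n := by
        have := congrArg (fun q : ℚ => (q : ℝ)) h6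
        push_cast at this ⊢
        linarith
      rw [hcast]
      have : (((v : ℝ) - u) / 2 ^ n) = ((v - u : ℚ) : ℝ) / 2 ^ n := by push_cast; ring
      push_cast
      linarith
    have hlim : Tendsto (fun n : ℕ => t + ((v - u : ℚ) : ℝ) / 2 ^ n) atTop (nhds t) := by
      have h0 : Tendsto (fun n : ℕ => ((v - u : ℚ) : ℝ) / 2 ^ n) atTop (nhds 0) := by
        have h := tendsto_pow_atTop_nhds_zero_of_lt_one
          (show (0:ℝ) ≤ 1/2 by norm_num) (show (1/2:ℝ) < 1 by norm_num)
        have h2 := h.const_mul ((v - u : ℚ) : ℝ)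
        simp only [mul_zero] at h2
        convert h2 using 2 with n
        rw [div_pow, one_pow]
        ring
      have := tendsto_const_nhds (x := t) (f := atTop (α := ℕ)) |>.add h0
      simpa using this
    refine tendsto_of_tendsto_of_tendsto_of_le_of_le tendsto_const_nhds hlim
      (fun n => (inv n).2.2.2.2.1) ?_
    intro n
    exact_mod_cast hupper n
  have htif : Tendsto (fun n => ENNReal.ofReal (((bis δ u v x n).2 : ℝ))) atTop
      (nhds (ENNReal.ofReal t)) := (ENNReal.continuous_ofReal.tendsto t).comp htendb
  have hinf : (⨅ n, ENNReal.ofReal (((bis δ u v x n).2 : ℝ))) = ENNReal.ofReal t :=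
    tendsto_nhds_unique (tendsto_atTop_iInf hanti) htif
  show (⨅ n, ENNReal.ofReal (((bis δ u v x n).2 : ℝ))).toReal = t
  rw [hinf, ENNReal.toReal_ofReal ht0]

end NSDAux2

end


/-- Let `X` and `Y` be independent càdlàg processes with `X` stochastically continuous. Then
for every measurable nonnegative functional `F` on path space, almost surely `X` is (left)
continuous at the random time `F (Y)` (with the convention `X(0−) = X(0)`); in particular,
`X` and `Y` almost surely share no common discontinuity point. -/
theorem indep_stochastically_continuous_no_shared_disc
    {Ω : Type*} [MeasurableSpace Ω] (P : Measure Ω) [IsProbabilityMeasure P]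
    (X Y : Ω → ℝ → ℝ) (hX_meas : Measurable X) (hY_meas : Measurable Y)
    (hX_cadlag : ∀ ω, Cadlag (X ω)) (hY_cadlag : ∀ ω, Cadlag (Y ω))
    (hindep : IndepFun X Y P)
    (hX_stocont : ∀ t : ℝ, 0 ≤ t → ∀ ε : ℝ, 0 < ε →
      Tendsto (fun s => P {ω | ε ≤ |X ω s - X ω t|}) (nhdsWithin t (Set.Ici 0)) (nhds 0)) :
    (∀ F : (ℝ → ℝ) → ℝ, Measurable F → (∀ p, 0 ≤ F p) →
      ∀ᵐ ω ∂P, F (Y ω) = 0 ∨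
        Tendsto (X ω) (nhdsWithin (F (Y ω)) (Set.Iio (F (Y ω)))) (nhds (X ω (F (Y ω))))) ∧
    (∀ᵐ ω ∂P, ¬ ∃ t : ℝ, 0 < t ∧ PathDisc (X ω) t ∧ PathDisc (Y ω) t) := by
  classical
  set Rres : (ℝ → ℝ) → (ℚ → ℝ) := fun f q => f (q : ℝ) with hRres
  have hRres_meas : Measurable Rres := measurable_pi_lambda _ fun q => measurable_pi_apply (q : ℝ)
  set RX : Ω → (ℚ → ℝ) := fun ω => Rres (X ω) with hRX
  have hRXm : Measurable RX := hRres_meas.comp hX_meas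
  have hXs : ∀ s : ℝ, Measurable fun ω => X ω s := fun s => (measurable_pi_apply s).comp hX_meas
  -- for every fixed positive time, a.s. the process X is left-continuous there
  have hfix : ∀ t : ℝ, 0 < t → P {ω | (t, RX ω) ∈ NSDAux.badSet} = 0 := by
    intro t ht
    set A : ℕ → ℕ → Set Ω := fun j k =>
      {ω | 1 / ((j : ℝ) + 1) ≤ |X ω ((NSDAux.lq k t : ℚ) : ℝ) - X ω t|} with hA
    have hPA : ∀ j : ℕ, Tendsto (fun k => P (A j k)) atTop (nhds 0) := by
      intro j
      have hε : (0 : ℝ) < 1 / ((j : ℝ) + 1) := by positivity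
      have hcont := hX_stocont t ht.le _ hε
      have hu : Tendsto (fun k => ((NSDAux.lq k t : ℚ) : ℝ)) atTop
          (nhdsWithin t (Set.Ici 0)) := by
        refine tendsto_nhdsWithin_of_tendsto_nhds_of_eventually_within _
          (NSDAux.tendsto_lq t) ?_
        have hev : ∀ᶠ k : ℕ in atTop, (1 : ℝ) / 2 ^ k < t :=
          NSDAux.tendsto_inv_two_pow.eventually_lt_const ht
        filter_upwards [hev] with k hk
        have := NSDAux.le_lq k t
        simp only [Set.mem_Ici]
        linarith
      exact hcont.comp hu
    have hA0 : ∀ j N : ℕ, P (⋂ k, ⋂ (_ : N ≤ k), A j k) = 0 := by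
      intro j N
      by_contra h0
      have hpos : 0 < P (⋂ k, ⋂ (_ : N ≤ k), A j k) := zero_le.lt_of_ne (Ne.symm h0)
      obtain ⟨m, hm1, hm2⟩ :=
        (((hPA j).eventually_lt_const hpos).and (eventually_ge_atTop N)).exists
      have hle : P (⋂ k, ⋂ (_ : N ≤ k), A j k) ≤ P (A j m) :=
        measure_mono (Set.biInter_subset_of_mem hm2)
      exact absurd (lt_of_le_of_lt hle hm1) (lt_irrefl _)
    have hsub : {ω | (t, RX ω) ∈ NSDAux.badSet} ⊆
        ⋃ j : ℕ, ⋃ N : ℕ, ⋂ k, ⋂ (_ : N ≤ k), A j k := by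
      intro ω hω
      have hdisc : PathDisc (X ω) t := (NSDAux.mem_badSet_iff (hX_cadlag ω) ht).mp hω
      obtain ⟨l, hl⟩ := (hX_cadlag ω).2 t ht
      have hne : l ≠ X ω t := fun h => hdisc (h ▸ hl)
      have hJ : 0 < |l - X ω t| := abs_pos.mpr (sub_ne_zero.mpr hne)
      obtain ⟨j, hj⟩ := exists_nat_one_div_lt hJ
      have hconv : Tendsto (fun k => |X ω ((NSDAux.lq k t : ℚ) : ℝ) - X ω t|) atTop
          (nhds |l - X ω t|) :=
        ((hl.comp (NSDAux.tendsto_lq_within t)).sub tendsto_const_nhds).abs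
      have hev : ∀ᶠ k in atTop,
          1 / ((j : ℝ) + 1) ≤ |X ω ((NSDAux.lq k t : ℚ) : ℝ) - X ω t| :=
        hconv.eventually_const_le hj
      obtain ⟨N, hN⟩ := eventually_atTop.mp hev
      exact Set.mem_iUnion.mpr ⟨j, Set.mem_iUnion.mpr ⟨N,
        Set.mem_iInter.mpr fun k => Set.mem_iInter.mpr fun hk => hN k hk⟩⟩
    refine le_antisymm ?_ zero_le
    calc P {ω | (t, RX ω) ∈ NSDAux.badSet}
        ≤ P (⋃ j : ℕ, ⋃ N : ℕ, ⋂ k, ⋂ (_ : N ≤ k), A j k) := measure_mono hsub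
      _ = 0 := measure_iUnion_null fun j => measure_iUnion_null fun N => hA0 j N
  -- Part 1
  have part1 : ∀ F : (ℝ → ℝ) → ℝ, Measurable F → (∀ p, 0 ≤ F p) →
      ∀ᵐ ω ∂P, F (Y ω) = 0 ∨
        Tendsto (X ω) (nhdsWithin (F (Y ω)) (Set.Iio (F (Y ω)))) (nhds (X ω (F (Y ω)))) := by
    intro F hF hF0
    set T : Ω → ℝ := fun ω => F (Y ω) with hT
    have hTm : Measurable T := hF.comp hY_meas
    have hindep2 : IndepFun T RX P := hindep.symm.comp hF hRres_meas
    have hmap : P.map (fun ω => (T ω, RX ω)) = (P.map T).prod (P.map RX) :=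
      (indepFun_iff_map_prod_eq_prod_map_map hTm.aemeasurable hRXm.aemeasurable).mp hindep2
    haveI : IsProbabilityMeasure (P.map RX) := Measure.isProbabilityMeasure_map hRXm.aemeasurable
    haveI : IsProbabilityMeasure (P.map T) := Measure.isProbabilityMeasure_map hTm.aemeasurable
    have hBmeas := NSDAux.measurableSet_badSet
    have hslice : ∀ t : ℝ, (P.map RX) (Prod.mk t ⁻¹' NSDAux.badSet) = 0 := by
      intro t
      rw [Measure.map_apply hRXm (measurable_prodMk_left hBmeas)]
      rcases le_or_gt t 0 with ht | ht
      · have hempty : RX ⁻¹' (Prod.mk t ⁻¹' NSDAux.badSet) = ∅ := by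
          ext ω
          simp only [Set.mem_preimage, Set.mem_empty_iff_false, iff_false]
          intro hmem
          exact absurd hmem.1 (not_lt.mpr ht)
        rw [hempty, measure_empty]
      · exact hfix t ht
    have hzero : P {ω | (T ω, RX ω) ∈ NSDAux.badSet} = 0 := by
      have h1 : P {ω | (T ω, RX ω) ∈ NSDAux.badSet}
          = (P.map (fun ω => (T ω, RX ω))) NSDAux.badSet :=
        (Measure.map_apply (hTm.prodMk hRXm) hBmeas).symm
      rw [h1, hmap, Measure.prod_apply hBmeas]
      calc ∫⁻ t, (P.map RX) (Prod.mk t ⁻¹' NSDAux.badSet) ∂(P.map T)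
          = ∫⁻ _, 0 ∂(P.map T) := lintegral_congr fun t => hslice t
        _ = 0 := lintegral_zero
    have hae : ∀ᵐ ω ∂P, (T ω, RX ω) ∉ NSDAux.badSet := by
      have := measure_eq_zero_iff_ae_notMem.mp hzero
      filter_upwards [this] with ω hω using hω
    filter_upwards [hae] with ω hω
    rcases eq_or_lt_of_le (hF0 (Y ω)) with h0 | hpos
    · exact Or.inl h0.symm
    · right
      have hiff := NSDAux.mem_badSet_iff (hX_cadlag ω) (t := F (Y ω)) hpos
      have hnd : ¬ PathDisc (X ω) (F (Y ω)) := fun hd => hω (hiff.mpr hd)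
      exact not_not.mp hnd
  refine ⟨part1, ?_⟩
  -- Part 2
  have h2 : ∀ᵐ ω ∂P, ∀ (m : ℕ) (u v : ℚ),
      NSDAux2.jumpT (1 / ((m : ℝ) + 1)) u v (fun q : ℚ => Y ω (q : ℝ)) = 0 ∨
      Tendsto (X ω)
        (nhdsWithin (NSDAux2.jumpT (1 / ((m : ℝ) + 1)) u v (fun q : ℚ => Y ω (q : ℝ)))
          (Set.Iio (NSDAux2.jumpT (1 / ((m : ℝ) + 1)) u v (fun q : ℚ => Y ω (q : ℝ)))))
        (nhds (X ω (NSDAux2.jumpT (1 / ((m : ℝ) + 1)) u v (fun q : ℚ => Y ω (q : ℝ))))) := by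
    rw [ae_all_iff]
    intro m
    rw [ae_all_iff]
    intro u
    rw [ae_all_iff]
    intro v
    exact part1 (fun f => NSDAux2.jumpT (1 / ((m : ℝ) + 1)) u v (fun q : ℚ => f (q : ℝ)))
      ((NSDAux2.measurable_jumpT _ u v).comp
        (measurable_pi_lambda _ fun q => measurable_pi_apply (q : ℝ)))
      (fun p => NSDAux2.jumpT_nonneg _ _ _ _)
  filter_upwards [h2] with ω hω
  rintro ⟨t, ht, hdX, hdY⟩
  obtain ⟨l, hl⟩ := (hY_cadlag ω).2 t ht
  have hne : l ≠ Y ω t := fun h => hdY (h ▸ hl)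
  have hJ : 0 < |l - Y ω t| := abs_pos.mpr (sub_ne_zero.mpr hne)
  obtain ⟨m, hm⟩ := exists_nat_one_div_lt (show (0 : ℝ) < |l - Y ω t| / 2 by linarith)
  set δ : ℝ := 1 / ((m : ℝ) + 1) with hδdef
  have hδ : 0 < δ := by positivity
  have hJδ : 2 * δ ≤ |l - Y ω t| := by
    rw [hδdef]; linarith
  -- left control
  obtain ⟨ε₁, hε₁, hcl⟩ := Metric.tendsto_nhdsWithin_nhds.mp hl (δ / 8) (by positivity)
  -- right control
  obtain ⟨ε₂, hε₂, hcr⟩ :=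
    Metric.tendsto_nhdsWithin_nhds.mp ((hY_cadlag ω).1 t ht.le) (δ / 8) (by positivity)
  obtain ⟨u, hu1, hu2⟩ := exists_rat_btwn (show t - ε₁ < t by linarith)
  obtain ⟨v, hv1, hv2⟩ := exists_rat_btwn (show t < t + ε₂ by linarith)
  have hLq : ∀ q : ℚ, (u : ℝ) < (q : ℝ) → (q : ℝ) < t → |Y ω (q : ℝ) - l| ≤ δ / 8 := by
    intro q hq1 hq2
    have hdist : dist (q : ℝ) t < ε₁ := by
      rw [Real.dist_eq, abs_of_nonpos (by linarith)]
      linarith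
    exact le_of_lt (by simpa [Real.dist_eq] using hcl hq2 hdist)
  have hRq : ∀ q : ℚ, t ≤ (q : ℝ) → (q : ℝ) ≤ (v : ℝ) → |Y ω (q : ℝ) - Y ω t| ≤ δ / 8 := by
    intro q hq1 hq2
    have hdist : dist (q : ℝ) t < ε₂ := by
      rw [Real.dist_eq, abs_of_nonneg (by linarith)]
      linarith
    exact le_of_lt (by simpa [Real.dist_eq] using hcr hq1 hdist)
  have heq : NSDAux2.jumpT δ u v (fun q : ℚ => Y ω (q : ℝ)) = t :=
    NSDAux2.jumpT_eq hδ ht.le hu2 hv1.le hLq hRq hJδ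
  rcases hω m u v with hz | htend
  · rw [heq] at hz
    exact absurd hz (ne_of_gt ht)
  · rw [heq] at htend
    exact hdX htend
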